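/- There exists a constant c > 0 such that for every 0 < δ < 1 and all natural numbers k, k₁, k₂, k₃ with (k₁,k₂,k₃) ∉ σ_k^δ, one has |μ_k² − μ_{k₁}² + μ_{k₂}² − μ_{k₃}²| ≥ c · ⟨μ_k − s⟩ · ⟨μ_k⟩, where s = √(max(μ_{k₁}² − μ_{k₂}² + μ_{k₃}², 0)). -/
import Mathlib


/-- `μ_n = √(n(n+1))`, the square root of the `n`-th eigenvalue of `−Δ` on `S²`. -/
noncomputable def mu (n : ℕ) : ℝ := Real.sqrt (n * (n + 1))

/-- The Japanese bracket `⟨x⟩ = (1 + |x|²)^{1/2}`. -/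
noncomputable def jb (x : ℝ) : ℝ := Real.sqrt (1 + x ^ 2)

/-- The resonance set `σ_k^δ`: triples `(k₁,k₂,k₃)` with
`|μ_k − √(max(μ_{k₁}² − μ_{k₂}² + μ_{k₃}², 0))| ≤ 1` or `μ_k ≤ 1/δ`. -/
def resSet (δ : ℝ) (k : ℕ) : Set (ℕ × ℕ × ℕ) :=
  {t | |mu k - Real.sqrt (max (mu t.1 ^ 2 - mu t.2.1 ^ 2 + mu t.2.2 ^ 2) 0)| ≤ 1 ∨
    mu k ≤ 1 / δ}

/-- Lower bound on the non-resonant phase: there is `c > 0` such that for all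
`0 < δ < 1` and all `(k₁,k₂,k₃) ∉ σ_k^δ`,
`|μ_k² − μ_{k₁}² + μ_{k₂}² − μ_{k₃}²| ≥ c ⟨μ_k − s⟩ ⟨μ_k⟩` with
`s = √(max(μ_{k₁}² − μ_{k₂}² + μ_{k₃}², 0))`. -/
theorem nonresonant_phase_lower_bound :
    ∃ c : ℝ, 0 < c ∧ ∀ (δ : ℝ), 0 < δ → δ < 1 → ∀ (k k₁ k₂ k₃ : ℕ),
      (k₁, k₂, k₃) ∉ resSet δ k →
      |mu k ^ 2 - mu k₁ ^ 2 + mu k₂ ^ 2 - mu k₃ ^ 2| ≥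
        c * jb (mu k - Real.sqrt (max (mu k₁ ^ 2 - mu k₂ ^ 2 + mu k₃ ^ 2) 0)) * jb (mu k) := by
  refine ⟨1/2, by norm_num, ?_⟩
  intro δ hδ hδ1 k k₁ k₂ k₃ hmem
  simp only [resSet, Set.mem_setOf_eq, not_or, not_le] at hmem
  obtain ⟨h1, h2⟩ := hmem
  set E := mu k₁ ^ 2 - mu k₂ ^ 2 + mu k₃ ^ 2 with hE
  set s := Real.sqrt (max E 0) with hs
  have hs0 : 0 ≤ s := Real.sqrt_nonneg _
  have hμ0 : 0 ≤ mu k := Real.sqrt_nonneg _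
  have hμ1 : 1 < mu k := by
    have : 1 ≤ 1 / δ := by rw [le_div_iff₀ hδ]; linarith
    linarith
  have hs2 : s ^ 2 = max E 0 := Real.sq_sqrt (le_max_right _ _)
  have key : |mu k - s| * (mu k + s) ≤ |mu k ^ 2 - E| := by
    have habs : |mu k - s| * (mu k + s) = |mu k ^ 2 - s ^ 2| := by
      rw [← abs_of_nonneg (show (0:ℝ) ≤ mu k + s by linarith), ← abs_mul]
      ring_nf
    rw [habs]
    rcases le_or_gt 0 E with h | h
    · rw [hs2, max_eq_left h]
    · rw [hs2, max_eq_right h.le, sub_zero]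
      rw [abs_of_nonneg (by positivity), abs_of_nonneg (by nlinarith)]
      linarith
  have hjb1 : jb (mu k - s) ≤ Real.sqrt 2 * |mu k - s| := by
    rw [jb]
    have hle : 1 + (mu k - s) ^ 2 ≤ 2 * (mu k - s) ^ 2 := by
      nlinarith [sq_abs (mu k - s), h1]
    calc Real.sqrt (1 + (mu k - s) ^ 2) ≤ Real.sqrt (2 * (mu k - s) ^ 2) :=
          Real.sqrt_le_sqrt hle
      _ = Real.sqrt 2 * |mu k - s| := by
          rw [Real.sqrt_mul (by norm_num), Real.sqrt_sq_eq_abs]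
  have hjb2 : jb (mu k) ≤ Real.sqrt 2 * mu k := by
    rw [jb]
    have hle : 1 + mu k ^ 2 ≤ 2 * mu k ^ 2 := by nlinarith
    calc Real.sqrt (1 + mu k ^ 2) ≤ Real.sqrt (2 * mu k ^ 2) := Real.sqrt_le_sqrt hle
      _ = Real.sqrt 2 * mu k := by
          rw [Real.sqrt_mul (by norm_num), Real.sqrt_sq hμ0]
  have hjb1' : 0 ≤ jb (mu k - s) := Real.sqrt_nonneg _
  have hjb2' : 0 ≤ jb (mu k) := Real.sqrt_nonneg _
  have hprod : jb (mu k - s) * jb (mu k) ≤ 2 * (|mu k - s| * mu k) := by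
    have := mul_le_mul hjb1 hjb2 hjb2' (by positivity)
    calc jb (mu k - s) * jb (mu k) ≤ Real.sqrt 2 * |mu k - s| * (Real.sqrt 2 * mu k) := this
      _ = (Real.sqrt 2 * Real.sqrt 2) * (|mu k - s| * mu k) := by ring
      _ = 2 * (|mu k - s| * mu k) := by
          rw [Real.mul_self_sqrt (by norm_num)]
  have hle2 : |mu k - s| * mu k ≤ |mu k - s| * (mu k + s) :=
    mul_le_mul_of_nonneg_left (by linarith) (abs_nonneg _)
  have hfinal : |mu k ^ 2 - mu k₁ ^ 2 + mu k₂ ^ 2 - mu k₃ ^ 2| = |mu k ^ 2 - E| := by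
    rw [hE]; ring_nf
  rw [ge_iff_le, hfinal]
  nlinarith [key, hprod, hle2]
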